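/- Let G = (V, E) be a finite directed graph with terminals s, t, and suppose each edge e ∈ E is independently present with probability p. Let G' be the game graph with node set {e_uv : (u,v) ∈ E} ∪ {init, ⊤, ⊥} and edges as in the reliability reduction, with each non-sink node independently assigned to Max with probability p. Then the probability that Max wins the induced toss-at-start reachability game on G' (target ⊤) equals p times the probability that t is reachable from s in the random subgraph of G. -/

import Mathlib

open scoped Classical

/-- Max has a strategy to reach `target` regardless of Min's play in the two-player
reachability game with ownership `own` (`true` = Max). -/
inductive MaxWin {V : Type} (E : V → V → Prop) (own : V → Bool) (target : V) : V → Prop where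
  | base : MaxWin E own target target
  | maxStep (v w : V) : own v = true → E v w → MaxWin E own target w → MaxWin E own target v
  | minStep (v : V) : own v = false → (∃ w, E v w) →
      (∀ w, E v w → MaxWin E own target w) → MaxWin E own target v

/-- The game graph `G'` of the reliability reduction.  Nodes: `Sum.inl (Sum.inl e)` is the
edge-node `e_uv` for the edge `e` of `G` (with endpoints `src e`, `tgt e`),
`Sum.inl (Sum.inr ())` is `init`, `Sum.inr true` is `⊤` and `Sum.inr false` is `⊥`.
Edges: `init → e_sv` for edges out of `s`; `e_uv → e_vw` for composable pairs; `e_ut → ⊤`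
for edges into `t`; every node other than `⊤` has an edge to `⊥`; self-loops on `⊤`, `⊥`. -/
def relE {ε V : Type} (src tgt : ε → V) (s t : V) :
    (ε ⊕ Unit) ⊕ Bool → (ε ⊕ Unit) ⊕ Bool → Prop
  | Sum.inl (Sum.inr _), Sum.inl (Sum.inl e) => src e = s
  | Sum.inl (Sum.inl e), Sum.inl (Sum.inl e') => tgt e = src e'
  | Sum.inl (Sum.inl e), Sum.inr b => (b = true ∧ tgt e = t) ∨ b = false
  | Sum.inl (Sum.inr _), Sum.inr b => b = false
  | Sum.inr b, Sum.inr b' => b = b'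
  | _, _ => False

/-- `t` is reachable from `s` in the random subgraph of `G` given by the present edges `χ`. -/
def ReachVia {ε V : Type} (src tgt : ε → V) (s t : V) (χ : ε → Bool) : Prop :=
  Relation.ReflTransGen (fun u v => ∃ e, χ e = true ∧ src e = u ∧ tgt e = v) s t

/-- Reliability reduction, probabilistic form: with every non-sink node of `G'` independently
assigned to Max with probability `p`, the probability that Max wins the induced toss-at-start
reachability game on `G'` (target `⊤`) equals `p` times the probability that `t` is reachable
from `s` in the random subgraph of `G` (each edge present independently with probability
`p`). -/
lemma maxWin_init_iff {ε V : Type} (src tgt : ε → V) (s t : V) (hst : s ≠ t)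
    (A : ε ⊕ Unit → Bool) :
    MaxWin (relE src tgt s t) (Sum.elim A fun _ => false) (Sum.inr true)
        (Sum.inl (Sum.inr ())) ↔
      A (Sum.inr ()) = true ∧ ReachVia src tgt s t (fun e => A (Sum.inl e)) := by
  set χ : ε → Bool := fun e => A (Sum.inl e) with hχ
  constructor
  · intro h
    have key : ∀ v, MaxWin (relE src tgt s t) (Sum.elim A fun _ => false) (Sum.inr true) v →
        (match v with
         | Sum.inr true => True
         | Sum.inr false => False
         | Sum.inl (Sum.inl e) => χ e = true ∧ ReachVia src tgt (tgt e) t χ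
         | Sum.inl (Sum.inr _) => A (Sum.inr ()) = true ∧ ReachVia src tgt s t χ) := by
      intro v hv
      induction hv with
      | base => trivial
      | maxStep v w hown hE hw ih =>
        rcases v with (e | u) | b
        · rcases w with (e' | u') | b
          · exact ⟨hown, Relation.ReflTransGen.head ⟨e', ih.1, (hE : tgt e = src e').symm, rfl⟩
              ih.2⟩
          · exact absurd hE (by exact id)
          · rcases b with _ | _
            · exact absurd hE (by rintro ((⟨h1, h2⟩) | h1) <;> simp_all)
            · rcases (hE : (true = true ∧ tgt e = t) ∨ (true : Bool) = false) with ⟨_, ht⟩ | h1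
              · exact ⟨hown, ht ▸ Relation.ReflTransGen.refl⟩
              · simp at h1
        · rcases w with (e' | u') | b
          · cases u
            exact ⟨hown, Relation.ReflTransGen.head ⟨e', ih.1, (hE : src e' = s), rfl⟩ ih.2⟩
          · exact absurd hE (by exact id)
          · have : b = false := hE
            subst this; exact absurd ih (by exact id)
        · simp at hown
      | minStep v hown hex hall ih =>
        rcases v with (e | u) | b
        · exact absurd (ih (Sum.inr false) (Or.inr rfl)) (by exact id)
        · exact absurd (ih (Sum.inr false) rfl) (by exact id)
        · rcases b with _ | _
          · exact absurd (ih (Sum.inr false) rfl) (by exact id)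
          · trivial
    exact key _ h
  · rintro ⟨hA, hr⟩
    have main : ∀ u, Relation.ReflTransGen
          (fun u v => ∃ e, χ e = true ∧ src e = u ∧ tgt e = v) u t →
        ∀ e, χ e = true → tgt e = u →
          MaxWin (relE src tgt s t) (Sum.elim A fun _ => false) (Sum.inr true)
            (Sum.inl (Sum.inl e)) := by
      intro u hu
      induction hu using Relation.ReflTransGen.head_induction_on with
      | refl =>
        intro e he hte
        exact MaxWin.maxStep _ (Sum.inr true) he (Or.inl ⟨rfl, hte⟩) MaxWin.base
      | head hstep hrest ih =>
        obtain ⟨e', he', hs', ht'⟩ := hstep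
        intro e he hte
        exact MaxWin.maxStep _ (Sum.inl (Sum.inl e')) he
          (show tgt e = src e' from hte.trans hs'.symm) (ih e' he' ht')
    rcases hr.cases_head with heq | ⟨u, ⟨e, he, hse, hte⟩, hrest⟩
    · exact absurd heq hst
    · exact MaxWin.maxStep _ (Sum.inl (Sum.inl e)) hA hse (main u hrest e he hte)

theorem reliability_reduction_probability {ε V : Type} [Fintype ε] [DecidableEq ε]
    (src tgt : ε → V) (s t : V) (hst : s ≠ t) (p : ℝ) (hp : 0 < p) (hp1 : p < 1) :
    ∑ A : ε ⊕ Unit → Bool,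
        (∏ x : ε ⊕ Unit, if A x then p else 1 - p) *
          (if MaxWin (relE src tgt s t) (Sum.elim A fun _ => false) (Sum.inr true)
              (Sum.inl (Sum.inr ())) then 1 else 0)
      = p * ∑ χ : ε → Bool,
          (∏ e : ε, if χ e then p else 1 - p) *
            (if ReachVia src tgt s t χ then 1 else 0) := by
  classical
  have hbij : Function.Bijective
      (fun x : (ε → Bool) × Bool => (Sum.elim x.1 fun _ => x.2 : ε ⊕ Unit → Bool)) := by
    constructor
    · rintro ⟨χ₁, b₁⟩ ⟨χ₂, b₂⟩ h
      have h1 : χ₁ = χ₂ := funext fun i => congrFun h (Sum.inl i)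
      have h2 : b₁ = b₂ := congrFun h (Sum.inr ())
      simp [h1, h2]
    · intro A
      refine ⟨(fun i => A (Sum.inl i), A (Sum.inr ())), funext fun y => ?_⟩
      rcases y with i | u
      · rfl
      · cases u; rfl
  rw [← Fintype.sum_bijective _ hbij _ _ (fun x => rfl), Fintype.sum_prod_type, Finset.mul_sum]
  refine Finset.sum_congr rfl fun χ _ => ?_
  rw [Fintype.sum_bool]
  simp only [maxWin_init_iff src tgt s t hst, Sum.elim_inl, Sum.elim_inr,
    Fintype.prod_sum_type, Finset.univ_unique, Finset.prod_singleton, if_true, if_false,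
    Bool.true_eq_false, false_and, true_and]
  by_cases hR : ReachVia src tgt s t χ <;> simp [hR] <;> rw [mul_comm] <;> congr 1
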